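/- Let H be a complex Hilbert space, (P_k)_{k∈I} mutually orthogonal projections on H, and (a_k) a finitely supported family of bounded operators such that for each k there is a nonnegative real c_k with P_k^⊥ a_k^* a_k P_k^⊥ = c_k · P_k^⊥, where P_k^⊥ = 1 − P_k. Then ‖Σ_k P_k a_k P_k^⊥‖² ≤ Σ_k c_k. -/
import Mathlib

open scoped InnerProductSpace

section Aux

variable {H : Type*} [NormedAddCommGroup H] [InnerProductSpace ℂ H] [CompleteSpace H]

lemma sa_inner_move {Q : H →L[ℂ] H} (hQ : IsSelfAdjoint Q) (x y : H) :
    ⟪Q x, y⟫_ℂ = ⟪x, Q y⟫_ℂ := by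
  conv_lhs => rw [← hQ.adjoint_eq]
  exact ContinuousLinearMap.adjoint_inner_left Q y x

lemma proj_norm_apply_le {Q : H →L[ℂ] H} (hQ : IsSelfAdjoint Q)
    (hQi : IsIdempotentElem Q) (x : H) : ‖Q x‖ ≤ ‖x‖ := by
  rcases eq_or_ne (Q x) 0 with h | h
  · simp [h]
  · have key : (‖Q x‖ : ℝ) ^ 2 ≤ ‖x‖ * ‖Q x‖ := by
      have h1 : (‖Q x‖ : ℝ) ^ 2 = RCLike.re ⟪Q x, Q x⟫_ℂ :=
        (inner_self_eq_norm_sq (𝕜 := ℂ) _).symm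
      have h2 : ⟪Q x, Q x⟫_ℂ = ⟪x, Q x⟫_ℂ := by
        rw [sa_inner_move hQ, ← ContinuousLinearMap.mul_apply, hQi.eq]
      calc (‖Q x‖ : ℝ) ^ 2 = RCLike.re ⟪x, Q x⟫_ℂ := by rw [h1, h2]
        _ ≤ ‖⟪x, Q x⟫_ℂ‖ := RCLike.re_le_norm _
        _ ≤ ‖x‖ * ‖Q x‖ := norm_inner_le_norm _ _
    have hpos : 0 < ‖Q x‖ := norm_pos_iff.mpr h
    nlinarith

end Aux

/-- column estimate: if `P k` are mutually orthogonal projections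
and `(1 - P k) (a k)* (a k) (1 - P k) = c k • (1 - P k)` with `c k ≥ 0`, then
`‖∑ k in s, P k * a k * (1 - P k)‖² ≤ ∑ k in s, c k`. -/
theorem norm_sq_sum_column_le {H : Type*} [NormedAddCommGroup H]
    [InnerProductSpace ℂ H] [CompleteSpace H] {I : Type*}
    (P : I → H →L[ℂ] H) (hPsa : ∀ k, IsSelfAdjoint (P k))
    (hPidem : ∀ k, IsIdempotentElem (P k))
    (hPorth : ∀ j k, j ≠ k → P j * P k = 0)
    (a : I → H →L[ℂ] H) (c : I → ℝ) (hc : ∀ k, 0 ≤ c k)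
    (hdiag : ∀ k, (1 - P k) * (star (a k) * a k) * (1 - P k)
      = (c k : ℂ) • (1 - P k))
    (s : Finset I) :
    ‖∑ k ∈ s, P k * a k * (1 - P k)‖ ^ 2 ≤ ∑ k ∈ s, c k := by
  have hS : (0:ℝ) ≤ ∑ k ∈ s, c k := Finset.sum_nonneg fun k _ => hc k
  have hQsa : ∀ k, IsSelfAdjoint (1 - P k) := fun k => (IsSelfAdjoint.one _).sub (hPsa k)
  have hQi : ∀ k, IsIdempotentElem (1 - P k) := fun k => (hPidem k).one_sub
  -- main pointwise bound
  have main : ∀ x : H, ‖(∑ k ∈ s, P k * a k * (1 - P k)) x‖ ^ 2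
      ≤ (∑ k ∈ s, c k) * ‖x‖ ^ 2 := by
    intro x
    set v : I → H := fun k => (P k * a k * (1 - P k)) x with hv
    have happ : (∑ k ∈ s, P k * a k * (1 - P k)) x = ∑ k ∈ s, v k := by
      simp [hv, ContinuousLinearMap.sum_apply]
    rw [happ]
    -- orthogonality of the v k
    have horth : ∀ j ∈ s, ∀ k ∈ s, j ≠ k → ⟪v j, v k⟫_ℂ = 0 := by
      intro j _ k _ hjk
      have hvj : v j = P j ((a j * (1 - P j)) x) := rfl
      have hvk : v k = P k ((a k * (1 - P k)) x) := rfl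
      rw [hvj, hvk, sa_inner_move (hPsa j), ← ContinuousLinearMap.mul_apply,
        hPorth j k hjk]
      simp
    -- norm of sum squared equals sum of norms squared
    have hsum : (‖∑ k ∈ s, v k‖ : ℝ) ^ 2 = ∑ k ∈ s, ‖v k‖ ^ 2 := by
      have h1 : ⟪∑ j ∈ s, v j, ∑ k ∈ s, v k⟫_ℂ = ∑ k ∈ s, ⟪v k, v k⟫_ℂ := by
        rw [sum_inner]
        refine Finset.sum_congr rfl fun j hj => ?_
        rw [inner_sum]
        rw [Finset.sum_eq_single j (fun k hk hkj => horth j hj k hk (Ne.symm hkj))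
          (fun h => absurd hj h)]
      calc (‖∑ k ∈ s, v k‖ : ℝ) ^ 2
          = RCLike.re ⟪∑ j ∈ s, v j, ∑ k ∈ s, v k⟫_ℂ :=
            (inner_self_eq_norm_sq (𝕜 := ℂ) _).symm
        _ = ∑ k ∈ s, RCLike.re ⟪v k, v k⟫_ℂ := by rw [h1, map_sum]
        _ = ∑ k ∈ s, ‖v k‖ ^ 2 :=
            Finset.sum_congr rfl fun k _ => inner_self_eq_norm_sq (𝕜 := ℂ) _
    rw [hsum]
    -- bound each term
    have hterm : ∀ k ∈ s, ‖v k‖ ^ 2 ≤ c k * ‖x‖ ^ 2 := by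
      intro k _
      set u : H := (1 - P k) x with hu
      have hv1 : ‖v k‖ ≤ ‖a k u‖ := proj_norm_apply_le (hPsa k) (hPidem k) _
      have huu : ⟪u, u⟫_ℂ = ⟪x, (1 - P k) x⟫_ℂ := by
        rw [hu, sa_inner_move (hQsa k), ← ContinuousLinearMap.mul_apply, (hQi k).eq]
      have e2 : ⟪a k u, a k u⟫_ℂ
          = ⟪x, ((1 - P k) * (star (a k) * a k) * (1 - P k)) x⟫_ℂ := by
        rw [← ContinuousLinearMap.adjoint_inner_right (a k),
          ← ContinuousLinearMap.star_eq_adjoint]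
        have h3 : (star (a k)) (a k u) = ((star (a k) * a k) * (1 - P k)) x := rfl
        rw [h3, hu, sa_inner_move (hQsa k), ← ContinuousLinearMap.mul_apply,
          ← mul_assoc, mul_assoc (1 - P k)]
      have e3 : ⟪x, ((1 - P k) * (star (a k) * a k) * (1 - P k)) x⟫_ℂ
          = (c k : ℂ) * ⟪u, u⟫_ℂ := by
        rw [hdiag k, ContinuousLinearMap.smul_apply, inner_smul_right, huu]
      have hv2 : ‖a k u‖ ^ 2 = c k * ‖u‖ ^ 2 := by
        calc ‖a k u‖ ^ 2 = RCLike.re ⟪a k u, a k u⟫_ℂ :=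
              (inner_self_eq_norm_sq (𝕜 := ℂ) _).symm
          _ = RCLike.re ((c k : ℂ) * ((‖u‖ ^ 2 : ℝ) : ℂ)) := by
              rw [e2, e3, inner_self_eq_norm_sq_to_K (𝕜 := ℂ)]
              norm_num
          _ = c k * ‖u‖ ^ 2 := by
              rw [← Complex.ofReal_mul]
              exact Complex.ofReal_re _
      have hv3 : ‖u‖ ≤ ‖x‖ := proj_norm_apply_le (hQsa k) (hQi k) x
      calc ‖v k‖ ^ 2 ≤ ‖a k u‖ ^ 2 := pow_le_pow_left₀ (norm_nonneg _) hv1 2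
        _ = c k * ‖u‖ ^ 2 := hv2
        _ ≤ c k * ‖x‖ ^ 2 :=
            mul_le_mul_of_nonneg_left (pow_le_pow_left₀ (norm_nonneg _) hv3 2) (hc k)
    calc ∑ k ∈ s, ‖v k‖ ^ 2 ≤ ∑ k ∈ s, c k * ‖x‖ ^ 2 := Finset.sum_le_sum hterm
      _ = (∑ k ∈ s, c k) * ‖x‖ ^ 2 := by rw [← Finset.sum_mul]
  -- conclude operator norm bound
  have hnorm : ‖∑ k ∈ s, P k * a k * (1 - P k)‖ ≤ Real.sqrt (∑ k ∈ s, c k) := by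
    refine ContinuousLinearMap.opNorm_le_bound _ (Real.sqrt_nonneg _) fun x => ?_
    have h := main x
    have hsq : ‖(∑ k ∈ s, P k * a k * (1 - P k)) x‖ ^ 2
        ≤ (Real.sqrt (∑ k ∈ s, c k) * ‖x‖) ^ 2 := by
      rw [mul_pow, Real.sq_sqrt hS]; exact h
    have hb : 0 ≤ Real.sqrt (∑ k ∈ s, c k) * ‖x‖ :=
      mul_nonneg (Real.sqrt_nonneg _) (norm_nonneg _)
    nlinarith [norm_nonneg ((∑ k ∈ s, P k * a k * (1 - P k)) x)]
  calc ‖∑ k ∈ s, P k * a k * (1 - P k)‖ ^ 2 ≤ Real.sqrt (∑ k ∈ s, c k) ^ 2 :=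
        pow_le_pow_left₀ (norm_nonneg _) hnorm 2
    _ = ∑ k ∈ s, c k := Real.sq_sqrt hS
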